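/- Let 1 ≤ a ≤ 2 and let φ_a(ξ) = ξ₁|ξ|^a on ℝ². There exist constants c > 0 and N₀ ≥ 1, depending only on a, with the following property: for every real N ≥ N₀ and all ξ₁, ξ₂, ξ₃ ∈ ℝ² with N/8 ≤ |ξ_i| ≤ 8N for i = 1, 2, 3 and ξ₁ + ξ₂ + ξ₃ = 0, there are indices i, j ∈ {1,2,3} such that |∇φ_a(ξ_i) − ∇φ_a(ξ_j)| ≥ c N^a. -/

import Mathlib

open scoped ENNReal

/-- The gradient of the dispersion relation `φ_a(ξ) = ξ₁|ξ|^a` on `ℝ²`: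
`∇φ_a(ξ) = (|ξ|^a + a ξ₁² |ξ|^{a-2}, a ξ₁ ξ₂ |ξ|^{a-2})`. -/
noncomputable def gradPhiA (a : ℝ) (ξ : EuclideanSpace ℝ (Fin 2)) :
    EuclideanSpace ℝ (Fin 2) :=
  (WithLp.equiv 2 (Fin 2 → ℝ)).symm
    ![‖ξ‖ ^ a + a * (ξ 0) ^ 2 * ‖ξ‖ ^ (a - 2), a * (ξ 0) * (ξ 1) * ‖ξ‖ ^ (a - 2)]

namespace HHH

lemma grad0 (a : ℝ) (ξ : EuclideanSpace ℝ (Fin 2)) :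
    gradPhiA a ξ 0 = ‖ξ‖ ^ a + a * (ξ 0) ^ 2 * ‖ξ‖ ^ (a - 2) := by
  simp [gradPhiA]

lemma grad1 (a : ℝ) (ξ : EuclideanSpace ℝ (Fin 2)) :
    gradPhiA a ξ 1 = a * (ξ 0) * (ξ 1) * ‖ξ‖ ^ (a - 2) := by
  simp [gradPhiA]

lemma normsq (ξ : EuclideanSpace ℝ (Fin 2)) : ‖ξ‖ ^ 2 = (ξ 0) ^ 2 + (ξ 1) ^ 2 := by
  rw [EuclideanSpace.norm_eq, Real.sq_sqrt (by positivity)]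
  simp [Fin.sum_univ_two, sq_abs]

lemma eqE {ξ η : EuclideanSpace ℝ (Fin 2)} (h0 : ξ 0 = η 0) (h1 : ξ 1 = η 1) : ξ = η := by
  ext i; fin_cases i <;> assumption

lemma quadId (a r x y : ℝ) (hr : 0 < r) (hxy : x ^ 2 + y ^ 2 = r ^ 2) :
    (1 + a) * (r ^ a) ^ 2 - (2 + a) * (r ^ a + a * x ^ 2 * r ^ (a - 2)) * r ^ a
      + ((r ^ a + a * x ^ 2 * r ^ (a - 2)) ^ 2 + (a * x * y * r ^ (a - 2)) ^ 2) = 0 := by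
  have hs : r ^ a = r ^ (a - 2) * r ^ 2 := by
    rw [← Real.rpow_natCast r 2, ← Real.rpow_add hr]; norm_num
  have hy : y ^ 2 = r ^ 2 - x ^ 2 := by linarith
  rw [hs]
  linear_combination (a ^ 2 * x ^ 2 * (r ^ (a - 2)) ^ 2) * hy

lemma pm (x₁ y₁ x₂ y₂ : ℝ) (hx : x₂ ^ 2 = x₁ ^ 2) (hy : y₂ ^ 2 = y₁ ^ 2)
    (hxy : x₂ * y₂ = x₁ * y₁) : (x₂ = x₁ ∧ y₂ = y₁) ∨ (x₂ = -x₁ ∧ y₂ = -y₁) := by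
  have hx' : x₂ = x₁ ∨ x₂ = -x₁ := sq_eq_sq_iff_eq_or_eq_neg.mp hx
  have hy' : y₂ = y₁ ∨ y₂ = -y₁ := sq_eq_sq_iff_eq_or_eq_neg.mp hy
  rcases hx' with h1 | h1 <;> rcases hy' with h2 | h2
  · exact Or.inl ⟨h1, h2⟩
  · rcases mul_eq_zero.mp (by rw [h1, h2] at hxy; nlinarith : x₁ * y₁ = 0) with h | h
    · exact Or.inr ⟨by rw [h1, h, neg_zero], h2⟩
    · exact Or.inl ⟨h1, by rw [h2, h, neg_zero]⟩
  · rcases mul_eq_zero.mp (by rw [h1, h2] at hxy; nlinarith : x₁ * y₁ = 0) with h | h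
    · exact Or.inl ⟨by rw [h1, h, neg_zero], h2⟩
    · exact Or.inr ⟨h1, by rw [h2, h, neg_zero]⟩
  · exact Or.inr ⟨h1, h2⟩

lemma pairCase (a : ℝ) (ha1 : 1 ≤ a) (u v w : EuclideanSpace ℝ (Fin 2))
    (hu : u ≠ 0) (hw : w ≠ 0) (hsum : u + v + w = 0)
    (hg1 : gradPhiA a u = gradPhiA a v) (hg2 : gradPhiA a u = gradPhiA a w)
    (hnorm : ‖u‖ = ‖v‖) : False := by
  have ha : 0 < a := lt_of_lt_of_le one_pos ha1
  have hr : 0 < ‖u‖ := norm_pos_iff.mpr hu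
  set r := ‖u‖ with hrdef
  have hP : 0 < r ^ (a - 2) := Real.rpow_pos_of_pos hr _
  have e0 : (gradPhiA a u) 0 = (gradPhiA a v) 0 := by rw [hg1]
  have e1 : (gradPhiA a u) 1 = (gradPhiA a v) 1 := by rw [hg1]
  rw [grad0, grad0, ← hnorm] at e0
  rw [grad1, grad1, ← hnorm] at e1
  have hx2 : (v 0) ^ 2 = (u 0) ^ 2 := by
    have := mul_right_cancel₀ (ne_of_gt hP)
      (by linarith : a * (v 0) ^ 2 * r ^ (a-2) = a * (u 0) ^ 2 * r ^ (a-2))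
    field_simp at this; exact this
  have hxy : (v 0) * (v 1) = (u 0) * (u 1) := by
    have := mul_right_cancel₀ (ne_of_gt hP) (e1.symm)
    rw [mul_assoc, mul_assoc] at this
    exact mul_left_cancel₀ (ne_of_gt ha) this
  have hy2 : (v 1) ^ 2 = (u 1) ^ 2 := by
    have h1 := normsq u; have h2 := normsq v
    rw [← hrdef] at h1; rw [← hnorm] at h2; nlinarith
  rcases pm (u 0) (u 1) (v 0) (v 1) hx2 hy2 hxy with ⟨h0, h1⟩ | ⟨h0, h1⟩
  · -- v = u, so w = -2u
    have hvu : v = u := eqE h0 h1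
    have hwu : w = (-2 : ℝ) • u := by
      have hww : w = -(u + v) := eq_neg_of_add_eq_zero_right hsum
      rw [hww, hvu]; module
    have hw0 : w 0 = -2 * u 0 := by rw [hwu]; simp [PiLp.smul_apply]
    have hwn : ‖w‖ = 2 * r := by
      rw [hwu, norm_smul]; norm_num; exact hrdef.symm
    have e2 : (gradPhiA a u) 0 = (gradPhiA a w) 0 := by rw [hg2]
    rw [grad0, grad0, hw0, hwn] at e2
    have h2a : (2 * r) ^ a = 2 ^ a * r ^ a := Real.mul_rpow (by norm_num) hr.le
    have h2a' : (2 * r) ^ (a - 2) = 2 ^ (a-2) * r ^ (a-2) := Real.mul_rpow (by norm_num) hr.le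
    have h4 : (4 : ℝ) * 2 ^ (a - 2) = 2 ^ a := by
      have hh : (2:ℝ) ^ (a - 2) * 2 ^ (2:ℝ) = 2 ^ a := by
        rw [← Real.rpow_add (by norm_num)]; norm_num
      rw [← hh, show ((2:ℝ) ^ (2:ℝ)) = 4 by
        rw [show ((2:ℝ):ℝ) = ((2:ℕ):ℝ) by norm_num, Real.rpow_natCast]; norm_num]
      ring
    rw [h2a, h2a'] at e2
    have hV : 0 < r ^ a + a * (u 0) ^ 2 * r ^ (a - 2) := by positivity
    have h2ge : (2 : ℝ) ≤ 2 ^ a := by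
      calc (2:ℝ) = 2 ^ (1:ℝ) := by rw [Real.rpow_one]
      _ ≤ 2 ^ a := Real.rpow_le_rpow_left_iff (by norm_num) |>.mpr ha1
    nlinarith [e2, hV, h2ge, hP, Real.rpow_pos_of_pos hr a]
  · -- v = -u, so w = 0
    have hvu : v = -u := eqE (by rw [h0]; rfl) (by rw [h1]; rfl)
    apply hw
    have huv : u + v = 0 := by rw [hvu]; abel
    rw [huv, zero_add] at hsum; exact hsum

lemma rpow_inj' {r t a : ℝ} (hr : 0 ≤ r) (ht : 0 ≤ t) (ha : 0 < a)
    (h : r ^ a = t ^ a) : r = t := by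
  rcases lt_trichotomy r t with hlt | he | hlt
  · have := Real.rpow_lt_rpow hr hlt ha; linarith
  · exact he
  · have := Real.rpow_lt_rpow ht hlt ha; linarith

lemma no_triple (a : ℝ) (ha1 : 1 ≤ a) (ξ : Fin 3 → EuclideanSpace ℝ (Fin 2))
    (hnz : ∀ i, ξ i ≠ 0) (hsum : ξ 0 + ξ 1 + ξ 2 = 0)
    (h01 : gradPhiA a (ξ 0) = gradPhiA a (ξ 1))
    (h02 : gradPhiA a (ξ 0) = gradPhiA a (ξ 2)) : False := by
  have ha : 0 < a := lt_of_lt_of_le one_pos ha1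
  set s : Fin 3 → ℝ := fun i => ‖ξ i‖ ^ a with hs
  set v₁ : ℝ := (gradPhiA a (ξ 0)) 0 with hv1
  set v₂ : ℝ := (gradPhiA a (ξ 0)) 1 with hv2
  have hgi : ∀ i, gradPhiA a (ξ 0) = gradPhiA a (ξ i) := by
    intro i
    fin_cases i
    · rfl
    · exact h01
    · exact h02
  have Q : ∀ i, (1 + a) * (s i) ^ 2 - (2 + a) * v₁ * (s i) + (v₁ ^ 2 + v₂ ^ 2) = 0 := by
    intro i
    have hri : 0 < ‖ξ i‖ := norm_pos_iff.mpr (hnz i)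
    have hv1' : v₁ = ‖ξ i‖ ^ a + a * (ξ i 0) ^ 2 * ‖ξ i‖ ^ (a - 2) := by
      rw [hv1, hgi i, grad0]
    have hv2' : v₂ = a * (ξ i 0) * (ξ i 1) * ‖ξ i‖ ^ (a - 2) := by
      rw [hv2, hgi i, grad1]
    have := quadId a (‖ξ i‖) (ξ i 0) (ξ i 1) hri (normsq (ξ i)).symm
    rw [hv1', hv2', hs]
    linear_combination this
  have key : ∀ i j, s i ≠ s j → (1 + a) * (s i + s j) = (2 + a) * v₁ := by
    intro i j hij
    have hfac : ((1 + a) * (s i + s j) - (2 + a) * v₁) * (s i - s j) = 0 := by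
      linear_combination Q i - Q j
    rcases mul_eq_zero.mp hfac with h | h
    · linarith
    · exact absurd (by linarith : s i = s j) hij
  have hnormeq : ∀ i j, s i = s j → ‖ξ i‖ = ‖ξ j‖ := fun i j h =>
    rpow_inj' (norm_nonneg _) (norm_nonneg _) ha h
  by_cases h0 : s 0 = s 1
  · exact pairCase a ha1 (ξ 0) (ξ 1) (ξ 2) (hnz 0) (hnz 2) hsum h01 h02
      (hnormeq 0 1 h0)
  · by_cases h1 : s 0 = s 2
    · exact pairCase a ha1 (ξ 0) (ξ 2) (ξ 1) (hnz 0) (hnz 1)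
        (by rw [← hsum]; abel) h02 h01 (hnormeq 0 2 h1)
    · have k1 := key 0 1 h0
      have k2 := key 0 2 h1
      have h12 : s 1 = s 2 := by
        have h3 : (1 + a) * (s 1 - s 2) = 0 := by linarith
        rcases mul_eq_zero.mp h3 with h | h
        · linarith
        · linarith
      exact pairCase a ha1 (ξ 1) (ξ 2) (ξ 0) (hnz 1) (hnz 0)
        (by rw [← hsum]; abel) (h01.symm.trans h02) h01.symm (hnormeq 1 2 h12)

lemma grad_smul (a : ℝ) (t : ℝ) (ht : 0 < t) (ξ : EuclideanSpace ℝ (Fin 2)) :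
    gradPhiA a (t • ξ) = t ^ a • gradPhiA a ξ := by
  have hn : ‖t • ξ‖ = t * ‖ξ‖ := by rw [norm_smul, Real.norm_eq_abs, abs_of_pos ht]
  have hma : (t * ‖ξ‖) ^ a = t ^ a * ‖ξ‖ ^ a := Real.mul_rpow ht.le (norm_nonneg _)
  have hma' : (t * ‖ξ‖) ^ (a - 2) = t ^ (a-2) * ‖ξ‖ ^ (a-2) :=
    Real.mul_rpow ht.le (norm_nonneg _)
  have hta : t ^ (a - 2) * t ^ 2 = t ^ a := by
    rw [← Real.rpow_natCast t 2, ← Real.rpow_add ht]; norm_num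
  apply eqE
  · simp only [grad0, PiLp.smul_apply, smul_eq_mul, hn, hma, hma']
    linear_combination (a * (ξ 0) ^ 2 * ‖ξ‖ ^ (a - 2)) * hta
  · simp only [grad1, PiLp.smul_apply, smul_eq_mul, hn, hma']
    linear_combination (a * (ξ 0) * (ξ 1) * ‖ξ‖ ^ (a - 2)) * hta

lemma grad_contOn (a : ℝ) (ha1 : 1 ≤ a) :
    ContinuousOn (gradPhiA a) {x : EuclideanSpace ℝ (Fin 2) | x ≠ 0} := by
  have c0 : Continuous (fun ξ : EuclideanSpace ℝ (Fin 2) => ξ 0) :=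
    (continuous_apply (0 : Fin 2)).comp (PiLp.continuous_ofLp _ _)
  have c1 : Continuous (fun ξ : EuclideanSpace ℝ (Fin 2) => ξ 1) :=
    (continuous_apply (1 : Fin 2)).comp (PiLp.continuous_ofLp _ _)
  have cn : Continuous (fun ξ : EuclideanSpace ℝ (Fin 2) => ‖ξ‖) := continuous_norm
  have ca : ContinuousOn (fun ξ : EuclideanSpace ℝ (Fin 2) => ‖ξ‖ ^ a)
      {x | x ≠ 0} :=
    cn.continuousOn.rpow_const (fun x _ => Or.inr (le_trans zero_le_one ha1))
  have ca2 : ContinuousOn (fun ξ : EuclideanSpace ℝ (Fin 2) => ‖ξ‖ ^ (a - 2))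
      {x | x ≠ 0} :=
    cn.continuousOn.rpow_const (fun x hx => Or.inl (norm_ne_zero_iff.mpr hx))
  have f1 : ContinuousOn
      (fun ξ : EuclideanSpace ℝ (Fin 2) => ‖ξ‖ ^ a + a * (ξ 0) ^ 2 * ‖ξ‖ ^ (a - 2))
      {x | x ≠ 0} :=
    ca.add (((continuous_const.mul (c0.pow 2)).continuousOn).mul ca2)
  have f2 : ContinuousOn
      (fun ξ : EuclideanSpace ℝ (Fin 2) => a * (ξ 0) * (ξ 1) * ‖ξ‖ ^ (a - 2))
      {x | x ≠ 0} :=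
    (((continuous_const.mul c0).mul c1).continuousOn).mul ca2
  have : ContinuousOn
      (fun ξ : EuclideanSpace ℝ (Fin 2) =>
        (![‖ξ‖ ^ a + a * (ξ 0) ^ 2 * ‖ξ‖ ^ (a - 2),
           a * (ξ 0) * (ξ 1) * ‖ξ‖ ^ (a - 2)] : Fin 2 → ℝ)) {x | x ≠ 0} := by
    apply continuousOn_pi.mpr
    intro i; fin_cases i
    · simpa using f1
    · simpa using f2
  exact (PiLp.continuous_toLp (p := 2) (β := fun _ : Fin 2 => ℝ)).comp_continuousOn this


noncomputable def FF (a : ℝ) (ξ : Fin 3 → EuclideanSpace ℝ (Fin 2)) : ℝ :=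
  ‖gradPhiA a (ξ 0) - gradPhiA a (ξ 1)‖ + ‖gradPhiA a (ξ 0) - gradPhiA a (ξ 2)‖
    + ‖gradPhiA a (ξ 1) - gradPhiA a (ξ 2)‖

def KK : Set (Fin 3 → EuclideanSpace ℝ (Fin 2)) :=
  {ξ | (∀ i, 1/8 ≤ ‖ξ i‖ ∧ ‖ξ i‖ ≤ 8) ∧ ξ 0 + ξ 1 + ξ 2 = 0}

lemma KK_compact : IsCompact KK := by
  have h1 : IsClosed {ξ : Fin 3 → EuclideanSpace ℝ (Fin 2) | ∀ i, 1/8 ≤ ‖ξ i‖ ∧ ‖ξ i‖ ≤ 8} := by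
    have : {ξ : Fin 3 → EuclideanSpace ℝ (Fin 2) | ∀ i, 1/8 ≤ ‖ξ i‖ ∧ ‖ξ i‖ ≤ 8}
        = ⋂ i, (fun ξ : Fin 3 → EuclideanSpace ℝ (Fin 2) => ‖ξ i‖) ⁻¹' Set.Icc (1/8) 8 := by
      ext ξ; simp [Set.mem_iInter, Set.mem_Icc]
    rw [this]
    exact isClosed_iInter fun i => isClosed_Icc.preimage ((continuous_apply i).norm)
  have h2 : IsClosed {ξ : Fin 3 → EuclideanSpace ℝ (Fin 2) | ξ 0 + ξ 1 + ξ 2 = 0} :=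
    isClosed_eq (((continuous_apply (0:Fin 3)).add (continuous_apply 1)).add
      (continuous_apply 2)) continuous_const
  have hsub : KK ⊆ Metric.closedBall 0 8 := by
    intro ξ hξ
    rw [Metric.mem_closedBall, dist_zero_right]
    exact (pi_norm_le_iff_of_nonneg (by norm_num)).mpr fun i => (hξ.1 i).2
  exact (isCompact_closedBall 0 8).of_isClosed_subset (h1.inter h2) hsub

lemma KK_nonempty : KK.Nonempty := by
  refine ⟨![EuclideanSpace.single 0 1, EuclideanSpace.single 0 1,
    (-2 : ℝ) • EuclideanSpace.single 0 1], ?_, ?_⟩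
  · intro i
    fin_cases i <;>
      simp [EuclideanSpace.norm_single, norm_smul] <;> norm_num
  · show EuclideanSpace.single 0 (1:ℝ) + EuclideanSpace.single 0 1
      + (-2 : ℝ) • EuclideanSpace.single 0 1 = 0
    module

lemma FF_pos (a : ℝ) (ha1 : 1 ≤ a) {ξ : Fin 3 → EuclideanSpace ℝ (Fin 2)}
    (hξ : ξ ∈ KK) : 0 < FF a ξ := by
  have hnz : ∀ i, ξ i ≠ 0 := by
    intro i
    have := (hξ.1 i).1
    intro h; rw [h, norm_zero] at this; norm_num at this
  rcases lt_or_eq_of_le (by unfold FF; positivity : (0:ℝ) ≤ FF a ξ) with h | h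
  · exact h
  · exfalso
    have t1 : ‖gradPhiA a (ξ 0) - gradPhiA a (ξ 1)‖ = 0 := by
      have n1 : (0:ℝ) ≤ ‖gradPhiA a (ξ 0) - gradPhiA a (ξ 1)‖ := norm_nonneg _
      have n2 : (0:ℝ) ≤ ‖gradPhiA a (ξ 0) - gradPhiA a (ξ 2)‖ := norm_nonneg _
      have n3 : (0:ℝ) ≤ ‖gradPhiA a (ξ 1) - gradPhiA a (ξ 2)‖ := norm_nonneg _
      have := h.symm; unfold FF at this; linarith
    have t2 : ‖gradPhiA a (ξ 0) - gradPhiA a (ξ 2)‖ = 0 := by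
      have n1 : (0:ℝ) ≤ ‖gradPhiA a (ξ 0) - gradPhiA a (ξ 1)‖ := norm_nonneg _
      have n2 : (0:ℝ) ≤ ‖gradPhiA a (ξ 0) - gradPhiA a (ξ 2)‖ := norm_nonneg _
      have n3 : (0:ℝ) ≤ ‖gradPhiA a (ξ 1) - gradPhiA a (ξ 2)‖ := norm_nonneg _
      have := h.symm; unfold FF at this; linarith
    exact no_triple a ha1 ξ hnz hξ.2
      (sub_eq_zero.mp (norm_eq_zero.mp t1))
      (sub_eq_zero.mp (norm_eq_zero.mp t2))

lemma FF_contOn (a : ℝ) (ha1 : 1 ≤ a) : ContinuousOn (FF a) KK := by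
  have hmap : ∀ i : Fin 3, Set.MapsTo (fun ξ : Fin 3 → EuclideanSpace ℝ (Fin 2) => ξ i)
      KK {x | x ≠ 0} := by
    intro i ξ hξ h
    have := (hξ.1 i).1
    have h' : ξ i = 0 := h
    rw [h', norm_zero] at this; norm_num at this
  have hg : ∀ i : Fin 3, ContinuousOn
      (fun ξ : Fin 3 → EuclideanSpace ℝ (Fin 2) => gradPhiA a (ξ i)) KK :=
    fun i => (grad_contOn a ha1).comp (continuous_apply i).continuousOn (hmap i)
  exact (((hg 0).sub (hg 1)).norm.add (((hg 0).sub (hg 2)).norm)).add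
    (((hg 1).sub (hg 2)).norm)

end HHH

open HHH in
/-- High×High×High transversality for the fractional Zakharov-Kuznetsov dispersion
relation in the plane: for frequencies `ξ₁, ξ₂, ξ₃ ∈ ℝ²` of comparable size `N`
summing to zero, two of the group velocities differ by at least `c N^a`. -/
theorem high_high_high_transversality (a : ℝ) (ha1 : 1 ≤ a) (ha2 : a ≤ 2) :
    ∃ c > 0, ∃ N₀ : ℝ, 1 ≤ N₀ ∧
      ∀ N : ℝ, N₀ ≤ N →
        ∀ ξ : Fin 3 → EuclideanSpace ℝ (Fin 2),
          (∀ i, N/8 ≤ ‖ξ i‖ ∧ ‖ξ i‖ ≤ 8 * N) →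
          ξ 0 + ξ 1 + ξ 2 = 0 →
          ∃ i j : Fin 3, c * N ^ a ≤ ‖gradPhiA a (ξ i) - gradPhiA a (ξ j)‖ := by
  obtain ⟨z, hzK, hz⟩ := KK_compact.exists_isMinOn KK_nonempty (FF_contOn a ha1)
  set m : ℝ := FF a z with hm
  have hm0 : 0 < m := FF_pos a ha1 hzK
  refine ⟨m/3, by positivity, 1, le_refl 1, ?_⟩
  intro N hN ξ hbd hsum
  have hN0 : (0:ℝ) < N := lt_of_lt_of_le one_pos hN
  have hNi : (0:ℝ) < N⁻¹ := inv_pos.mpr hN0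
  set η : Fin 3 → EuclideanSpace ℝ (Fin 2) := fun i => N⁻¹ • ξ i with hη
  have hηn : ∀ i, ‖η i‖ = N⁻¹ * ‖ξ i‖ := by
    intro i
    show ‖N⁻¹ • ξ i‖ = N⁻¹ * ‖ξ i‖
    rw [norm_smul, Real.norm_eq_abs, abs_of_pos hNi]
  have hηK : η ∈ KK := by
    constructor
    · intro i
      rw [hηn i]
      constructor
      · have h1 := (hbd i).1
        have h2 : N⁻¹ * (N/8) ≤ N⁻¹ * ‖ξ i‖ := mul_le_mul_of_nonneg_left h1 hNi.le
        have h3 : N⁻¹ * (N/8) = 1/8 := by field_simp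
        linarith
      · have h1 := (hbd i).2
        have h2 : N⁻¹ * ‖ξ i‖ ≤ N⁻¹ * (8 * N) := mul_le_mul_of_nonneg_left h1 hNi.le
        have h3 : N⁻¹ * (8 * N) = 8 := by field_simp
        linarith
    · show N⁻¹ • ξ 0 + N⁻¹ • ξ 1 + N⁻¹ • ξ 2 = 0
      rw [← smul_add, ← smul_add, hsum, smul_zero]
  have hmin : m ≤ FF a η := hz hηK
  have hback : ∀ i, ξ i = N • η i := by
    intro i
    show ξ i = N • (N⁻¹ • ξ i)
    rw [smul_smul, mul_inv_cancel₀ (ne_of_gt hN0), one_smul]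
  have hNa : (0:ℝ) < N ^ a := Real.rpow_pos_of_pos hN0 a
  have key : ∀ i j : Fin 3,
      ‖gradPhiA a (ξ i) - gradPhiA a (ξ j)‖
        = N ^ a * ‖gradPhiA a (η i) - gradPhiA a (η j)‖ := by
    intro i j
    rw [hback i, hback j, grad_smul a N hN0, grad_smul a N hN0, ← smul_sub,
      norm_smul, Real.norm_eq_abs, abs_of_pos hNa]
  have main : ∃ i j : Fin 3, m/3 ≤ ‖gradPhiA a (η i) - gradPhiA a (η j)‖ := by
    by_contra hcon
    push_neg at hcon
    have c1 := hcon 0 1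
    have c2 := hcon 0 2
    have c3 := hcon 1 2
    have : FF a η < m := by unfold FF; linarith
    linarith
  obtain ⟨i, j, hij⟩ := main
  refine ⟨i, j, ?_⟩
  rw [key i j]
  calc m/3 * N ^ a = N ^ a * (m/3) := by ring
  _ ≤ N ^ a * ‖gradPhiA a (η i) - gradPhiA a (η j)‖ :=
      mul_le_mul_of_nonneg_left hij hNa.le
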